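/- Let φ be a satisfiable NAE-3-SAT formula, and construct the temporal graph (G, λ) from a satisfying assignment as follows: G has variable vertices x_i, x_i^T, x_i^F for each variable, clause vertices c, and a super vertex v, with edges as in the reduction; all edges incident to clause vertices get label 1; λ(x_i^F v) = 3 if x_i is true, λ(x_i^T v) = 3 if x_i is false; all other edges get label 2. Then in the Δ-periodic temporal graph (G, λ, Δ) with Δ ≥ 3: for every variable x_i, the duration of a fastest temporal path from x_i to v is 2 and from v to x_i is Δ; and for every clause c, the duration of a fastest temporal path from c to v is 2 and from v to c is Δ − 1. -/

import Mathlib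

open SimpleGraph

/-- A literal: a variable index together with its polarity (`true` = non-negated). -/
abbrev Lit := ℕ × Bool

/-- A NAE-3-SAT clause: three literals. -/
abbrev Clause := Lit × Lit × Lit

/-- The literal `l` evaluates to true under the assignment `σ`. -/
def evalLit (σ : ℕ → Bool) (l : Lit) : Prop := σ l.1 = l.2

/-- `l` is one of the three literals of clause `C`. -/
def inClause (l : Lit) (C : Clause) : Prop := l = C.1 ∨ l = C.2.1 ∨ l = C.2.2

/-- The vertices of the reduction graph: variable vertices `x i`, `xT i`, `xF i`,
clause vertices `cl j`, and the super vertex `sup`. -/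
inductive Vtx : Type
  | x (i : ℕ) | xT (i : ℕ) | xF (i : ℕ) | cl (j : ℕ) | sup
  deriving DecidableEq

/-- The vertex corresponding to a literal: `xT i` if positive, `xF i` if negated. -/
def litVtx (l : Lit) : Vtx := if l.2 then Vtx.xT l.1 else Vtx.xF l.1

/-- The edge relation of the reduction graph for a formula `φ` with `n` variables. -/
def NAERel (n : ℕ) (φ : List Clause) : Vtx → Vtx → Prop := fun a b =>
  (∃ i < n, a = Vtx.x i ∧ (b = Vtx.xT i ∨ b = Vtx.xF i)) ∨
  (∃ i < n, a = Vtx.xT i ∧ b = Vtx.xF i) ∨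
  (∃ i < n, (a = Vtx.xT i ∨ a = Vtx.xF i) ∧ b = Vtx.sup) ∨
  (∃ i < n, ∃ j < n, i ≠ j ∧ (a = Vtx.xT i ∨ a = Vtx.xF i) ∧ (b = Vtx.xT j ∨ b = Vtx.xF j)) ∨
  (∃ j < φ.length, ∃ l : Lit, inClause l (φ.getD j default) ∧ a = Vtx.cl j ∧ b = litVtx l)

open Classical in
/-- The labeling constructed from a satisfying assignment `σ`: edges incident to clause
vertices get label `1`; the edge `x_i^F v` gets label `3` if `x_i` is true, the edge
`x_i^T v` gets label `3` if `x_i` is false; all other edges get label `2`. -/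
noncomputable def redLab (σ : ℕ → Bool) : Vtx → Vtx → ℤ := fun a b =>
  if (∃ j, a = Vtx.cl j) ∨ (∃ j, b = Vtx.cl j) then 1
  else if ∃ i, σ i = true ∧
      ((a = Vtx.xF i ∧ b = Vtx.sup) ∨ (b = Vtx.xF i ∧ a = Vtx.sup)) then 3
  else if ∃ i, σ i = false ∧
      ((a = Vtx.xT i ∧ b = Vtx.sup) ∨ (b = Vtx.xT i ∧ a = Vtx.sup)) then 3
  else 2

/-- `times` is a valid schedule of strictly increasing Δ-periodic activation times for the
walk `W`, where the (directed) edge from `a` to `b` is active at times `≡ lab a b (mod Δ)`. -/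
def IsTemporalWalkD {V : Type*} (G : SimpleGraph V) (Δ : ℕ) (lab : V → V → ℤ)
    {u v : V} (W : G.Walk u v) (times : List ℤ) : Prop :=
  List.Forall₂ (fun (d : G.Dart) t => 1 ≤ t ∧ t ≡ lab d.toProd.1 d.toProd.2 [ZMOD (Δ : ℤ)])
    W.darts times ∧ times.Chain' (· < ·)

/-- There is a temporal path from `u` to `v` of duration `d`. -/
def HasDurD {V : Type*} (G : SimpleGraph V) (Δ : ℕ) (lab : V → V → ℤ)
    (u v : V) (d : ℤ) : Prop :=
  ∃ (W : G.Walk u v) (times : List ℤ), W.IsPath ∧ times ≠ [] ∧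
    IsTemporalWalkD G Δ lab W times ∧ times.getLast! - times.head! + 1 = d

/-- `d` is the duration of a fastest temporal path from `u` to `v`. -/
def IsFastestD {V : Type*} (G : SimpleGraph V) (Δ : ℕ) (lab : V → V → ℤ)
    (u v : V) (d : ℤ) : Prop :=
  HasDurD G Δ lab u v d ∧ ∀ d', HasDurD G Δ lab u v d' → d ≤ d'


open SimpleGraph

section generic
variable {V : Type*} {G : SimpleGraph V}

/-- Forall₂ relates the last elements. -/
lemma my_forall2_getLast {α β : Type*} {R : α → β → Prop} :
    ∀ {l1 : List α} {l2 : List β}, List.Forall₂ R l1 l2 →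
      ∀ (h1 : l1 ≠ []) (h2 : l2 ≠ []), R (l1.getLast h1) (l2.getLast h2) := by
  intro l1 l2 h
  induction h with
  | nil => intro h1 _; exact absurd rfl h1
  | @cons a b l1' l2' hab htail ih =>
    intro h1 h2
    rcases l1' with _ | ⟨c, l1''⟩
    · have : l2' = [] := by
        have h := htail.length_eq; simp at h; exact List.length_eq_zero_iff.mp h.symm
      subst this; simpa using hab
    · have h2' : l2' ≠ [] := by
        have := htail.length_eq; intro hc; rw [hc] at this; simp at this
      rw [List.getLast_cons (by simp), List.getLast_cons h2']
      exact ih _ h2'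

lemma my_head_lt_getLast {l : List ℤ} (hch : l.Chain' (· < ·)) (hl : 2 ≤ l.length) :
    l.head! < l.getLast! := by
  rcases l with _ | ⟨a, l⟩
  · simp at hl
  · have hln : l ≠ [] := by intro h; rw [h] at hl; simp at hl
    have hp := List.isChain_iff_pairwise.mp hch
    have hmem : (a :: l).getLast (by simp) ∈ l := by
      rw [List.getLast_cons hln]; exact List.getLast_mem hln
    have := (List.pairwise_cons.mp hp).1 _ hmem
    rw [List.getLast!_of_getLast? (List.getLast?_eq_getLast (by simp))]
    exact this

lemma my_diff_lb {D a b t1 t2 r : ℤ} (h1 : t1 ≡ a [ZMOD D]) (h2 : t2 ≡ b [ZMOD D])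
    (hlt : t1 < t2) (hr : r ≡ b - a [ZMOD D]) (h0 : 0 < r) (hD : r ≤ D) : r ≤ t2 - t1 := by
  have h3 : (t2 - t1) ≡ r [ZMOD D] := (h2.sub h1).trans hr.symm
  have hdvd : D ∣ (r - (t2 - t1)) := h3.dvd
  by_contra hcon
  push_neg at hcon
  have := Int.le_of_dvd (by omega) hdvd
  omega
end generic


section labels
variable (σ : ℕ → Bool)

lemma litVtx_ne_x (l : Lit) (i : ℕ) : litVtx l ≠ Vtx.x i := by unfold litVtx; split <;> simp
lemma litVtx_ne_cl (l : Lit) (j : ℕ) : litVtx l ≠ Vtx.cl j := by unfold litVtx; split <;> simp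
lemma litVtx_ne_sup (l : Lit) : litVtx l ≠ Vtx.sup := by unfold litVtx; split <;> simp

lemma lab_cl_left (j : ℕ) (b : Vtx) : redLab σ (Vtx.cl j) b = 1 := by
  unfold redLab; rw [if_pos (Or.inl ⟨j, rfl⟩)]

lemma lab_cl_right (a : Vtx) (j : ℕ) : redLab σ a (Vtx.cl j) = 1 := by
  unfold redLab; rw [if_pos (Or.inr ⟨j, rfl⟩)]

lemma lab_x_xT (i k : ℕ) : redLab σ (Vtx.x i) (Vtx.xT k) = 2 := by
  unfold redLab; split_ifs with h1 h2 h3 <;> simp_all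

lemma lab_x_xF (i k : ℕ) : redLab σ (Vtx.x i) (Vtx.xF k) = 2 := by
  unfold redLab; split_ifs with h1 h2 h3 <;> simp_all

lemma lab_xT_x (i k : ℕ) : redLab σ (Vtx.xT i) (Vtx.x k) = 2 := by
  unfold redLab; split_ifs with h1 h2 h3 <;> simp_all

lemma lab_xF_x (i k : ℕ) : redLab σ (Vtx.xF i) (Vtx.x k) = 2 := by
  unfold redLab; split_ifs with h1 h2 h3 <;> simp_all

lemma lab_xT_sup (i : ℕ) : redLab σ (Vtx.xT i) Vtx.sup = if σ i then 2 else 3 := by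
  unfold redLab; split_ifs with h1 h2 h3 h4 <;> simp_all

lemma lab_sup_xT (i : ℕ) : redLab σ Vtx.sup (Vtx.xT i) = if σ i then 2 else 3 := by
  unfold redLab; split_ifs with h1 h2 h3 h4 <;> simp_all

lemma lab_xF_sup (i : ℕ) : redLab σ (Vtx.xF i) Vtx.sup = if σ i then 3 else 2 := by
  unfold redLab; split_ifs with h1 h2 h3 h4 <;> simp_all

lemma lab_sup_xF (i : ℕ) : redLab σ Vtx.sup (Vtx.xF i) = if σ i then 3 else 2 := by
  unfold redLab; split_ifs with h1 h2 h3 h4 <;> simp_all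

lemma lab_lit_sup_true {l : Lit} (h : σ l.1 = l.2) : redLab σ (litVtx l) Vtx.sup = 2 := by
  obtain ⟨i, b⟩ := l
  cases b <;> simp_all [litVtx, lab_xT_sup, lab_xF_sup]

lemma lab_cl_lit (j : ℕ) (l : Lit) : redLab σ (Vtx.cl j) (litVtx l) = 1 := lab_cl_left σ j _

lemma lab_sup_lit_false {l : Lit} (h : σ l.1 ≠ l.2) : redLab σ Vtx.sup (litVtx l) = 3 := by
  obtain ⟨i, b⟩ := l
  cases b <;> simp_all [litVtx, lab_sup_xT, lab_sup_xF]

lemma lab_sup_mem (i : ℕ) (w : Vtx) (hw : w = Vtx.xT i ∨ w = Vtx.xF i) :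
    redLab σ Vtx.sup w = 2 ∨ redLab σ Vtx.sup w = 3 := by
  rcases hw with rfl | rfl
  · rw [lab_sup_xT]; split_ifs <;> simp
  · rw [lab_sup_xF]; split_ifs <;> simp
end labels

section adjx
variable {n : ℕ} {φ : List Clause}

lemma narel_sup_left (b : Vtx) : ¬ NAERel n φ Vtx.sup b := by
  rintro (⟨i,-,h,-⟩|⟨i,-,h,-⟩|⟨i,-,(h|h),-⟩|⟨i,-,j,-,-,(h|h),-⟩|⟨j,-,l,-,h,-⟩) <;>
    exact Vtx.noConfusion h

lemma adj_sup_to {w : Vtx} (h : (SimpleGraph.fromRel (NAERel n φ)).Adj Vtx.sup w) :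
    ∃ i, i < n ∧ (w = Vtx.xT i ∨ w = Vtx.xF i) := by
  rw [SimpleGraph.fromRel_adj] at h
  rcases h.2 with h' | h'
  · exact absurd h' (narel_sup_left w)
  · rcases h' with ⟨i,hi,ha,(hb|hb)⟩|⟨i,hi,ha,hb⟩|⟨i,hi,ha,hb⟩|⟨i,hi,j,hj,hne,ha,(hb|hb)⟩|⟨j,hj,l,hl,ha,hb⟩
    · exact Vtx.noConfusion hb
    · exact Vtx.noConfusion hb
    · exact Vtx.noConfusion hb
    · exact ⟨i, hi, ha⟩
    · exact Vtx.noConfusion hb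
    · exact Vtx.noConfusion hb
    · exact absurd hb.symm (litVtx_ne_sup l)

lemma adj_to_x {w : Vtx} {i : ℕ} (h : (SimpleGraph.fromRel (NAERel n φ)).Adj w (Vtx.x i)) :
    w = Vtx.xT i ∨ w = Vtx.xF i := by
  rw [SimpleGraph.fromRel_adj] at h
  rcases h.2 with h' | h'
  · rcases h' with ⟨i',hi,ha,hb⟩|⟨i',hi,ha,hb⟩|⟨i',hi,ha,hb⟩|⟨i',hi,j,hj,hne,ha,hb⟩|⟨j,hj,l,hl,ha,hb⟩
    · rcases hb with hb|hb <;> exact Vtx.noConfusion hb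
    · exact Vtx.noConfusion hb
    · exact Vtx.noConfusion hb
    · rcases hb with hb|hb <;> exact Vtx.noConfusion hb
    · exact absurd hb.symm (litVtx_ne_x l i)
  · rcases h' with ⟨i',hi,ha,hb⟩|⟨i',hi,ha,hb⟩|⟨i',hi,ha,hb⟩|⟨i',hi,j,hj,hne,ha,hb⟩|⟨j,hj,l,hl,ha,hb⟩
    · obtain rfl : i = i' := by injection ha
      exact hb
    · exact Vtx.noConfusion ha
    · rcases ha with ha|ha <;> exact Vtx.noConfusion ha
    · rcases ha with ha|ha <;> exact Vtx.noConfusion ha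
    · exact Vtx.noConfusion ha

lemma not_adj_sup_cl (j : ℕ) : ¬ (SimpleGraph.fromRel (NAERel n φ)).Adj Vtx.sup (Vtx.cl j) := by
  intro h
  obtain ⟨i, -, h | h⟩ := adj_sup_to h <;> exact Vtx.noConfusion h

lemma not_adj_x_sup (i : ℕ) : ¬ (SimpleGraph.fromRel (NAERel n φ)).Adj (Vtx.x i) Vtx.sup := by
  intro h
  obtain ⟨i', -, h | h⟩ := adj_sup_to h.symm <;> exact Vtx.noConfusion h

lemma not_adj_cl_sup (j : ℕ) : ¬ (SimpleGraph.fromRel (NAERel n φ)).Adj (Vtx.cl j) Vtx.sup :=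
  fun h => not_adj_sup_cl j h.symm

lemma adj_x_xT {i : ℕ} (hi : i < n) :
    (SimpleGraph.fromRel (NAERel n φ)).Adj (Vtx.x i) (Vtx.xT i) :=
  (SimpleGraph.fromRel_adj _ _ _).mpr ⟨by simp, Or.inl (Or.inl ⟨i, hi, rfl, Or.inl rfl⟩)⟩

lemma adj_x_xF {i : ℕ} (hi : i < n) :
    (SimpleGraph.fromRel (NAERel n φ)).Adj (Vtx.x i) (Vtx.xF i) :=
  (SimpleGraph.fromRel_adj _ _ _).mpr ⟨by simp, Or.inl (Or.inl ⟨i, hi, rfl, Or.inr rfl⟩)⟩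

lemma adj_xT_sup {i : ℕ} (hi : i < n) :
    (SimpleGraph.fromRel (NAERel n φ)).Adj (Vtx.xT i) Vtx.sup :=
  (SimpleGraph.fromRel_adj _ _ _).mpr ⟨by simp, Or.inl (Or.inr (Or.inr (Or.inl ⟨i, hi, Or.inl rfl, rfl⟩)))⟩

lemma adj_xF_sup {i : ℕ} (hi : i < n) :
    (SimpleGraph.fromRel (NAERel n φ)).Adj (Vtx.xF i) Vtx.sup :=
  (SimpleGraph.fromRel_adj _ _ _).mpr ⟨by simp, Or.inl (Or.inr (Or.inr (Or.inl ⟨i, hi, Or.inr rfl, rfl⟩)))⟩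

lemma adj_lit_sup {l : Lit} (hl : l.1 < n) :
    (SimpleGraph.fromRel (NAERel n φ)).Adj (litVtx l) Vtx.sup := by
  obtain ⟨i, b⟩ := l
  cases b
  · simpa [litVtx] using adj_xF_sup (φ := φ) hl
  · simpa [litVtx] using adj_xT_sup (φ := φ) hl

lemma adj_cl_lit {j : ℕ} {l : Lit} (hj : j < φ.length) (hl : inClause l (φ.getD j default)) :
    (SimpleGraph.fromRel (NAERel n φ)).Adj (Vtx.cl j) (litVtx l) :=
  (SimpleGraph.fromRel_adj _ _ _).mpr ⟨fun h => (litVtx_ne_cl l j) h.symm,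
    Or.inl (Or.inr (Or.inr (Or.inr (Or.inr ⟨j, hj, l, hl, rfl, rfl⟩))))⟩
end adjx

section extraction
variable {V : Type*} {G : SimpleGraph V} {Δ : ℕ} {lab : V → V → ℤ}

lemma temporal_facts {u v : V} {W : G.Walk u v} {times : List ℤ}
    (h : IsTemporalWalkD G Δ lab W times) (hne : times ≠ []) :
    times.length = W.length ∧
    (∃ w, G.Adj u w ∧ times.head! ≡ lab u w [ZMOD (Δ:ℤ)]) ∧
    (∃ w, G.Adj w v ∧ times.getLast! ≡ lab w v [ZMOD (Δ:ℤ)]) := by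
  obtain ⟨hfa, hch⟩ := h
  have hlen : W.darts.length = times.length := hfa.length_eq
  have hd : W.darts ≠ [] := by
    intro h0; rw [h0] at hlen; exact hne (List.length_eq_zero_iff.mp hlen.symm)
  refine ⟨by rw [← hlen, SimpleGraph.Walk.length_darts], ?_, ?_⟩
  · obtain ⟨t, ts, hts⟩ := List.exists_cons_of_ne_nil hne
    obtain ⟨d, ds, hds⟩ := List.exists_cons_of_ne_nil hd
    rw [hts, hds] at hfa
    have hR := (List.forall₂_cons.mp hfa).1
    have hfst : d.toProd.1 = u := by
      have h2 : (W.darts.head hd).toProd.1 = u := by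
        rw [SimpleGraph.Walk.head_darts_eq_firstDart]; rfl
      simp only [hds, List.head_cons] at h2
      exact h2
    refine ⟨d.toProd.2, hfst ▸ d.adj, ?_⟩
    rw [hts]
    show t ≡ lab u d.toProd.2 [ZMOD (Δ:ℤ)]
    rw [← hfst]
    exact hR.2
  · have hR := my_forall2_getLast hfa hd hne
    have hsnd : (W.darts.getLast hd).toProd.2 = v := by
      rw [SimpleGraph.Walk.getLast_darts_eq_lastDart]; rfl
    refine ⟨(W.darts.getLast hd).toProd.1, ?_, ?_⟩
    · have h3 := (W.darts.getLast hd).adj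
      rwa [hsnd] at h3
    · have h3 := hR.2
      rw [hsnd] at h3
      rw [List.getLast!_of_getLast? (List.getLast?_eq_getLast hne)]
      exact h3

lemma walk_two_le_length {u v : V} {W : G.Walk u v} (hadj : ¬ G.Adj u v)
    (hne : W.length ≠ 0) : 2 ≤ W.length := by
  rcases Nat.lt_or_ge W.length 2 with h | h
  · interval_cases h' : W.length
    · exact absurd rfl hne
    · exact absurd (W.adj_of_length_eq_one h') hadj
  · exact h

lemma hasDur_two {a b c : V} (h1 : G.Adj a b) (h2 : G.Adj b c)
    (hac : a ≠ c) {t1 t2 : ℤ} (ht1 : 1 ≤ t1) (ht2 : 1 ≤ t2) (hlt : t1 < t2)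
    (e1 : t1 ≡ lab a b [ZMOD (Δ:ℤ)]) (e2 : t2 ≡ lab b c [ZMOD (Δ:ℤ)]) :
    HasDurD G Δ lab a c (t2 - t1 + 1) := by
  refine ⟨SimpleGraph.Walk.cons h1 (SimpleGraph.Walk.cons h2 SimpleGraph.Walk.nil), [t1, t2],
    ?_, by simp, ⟨?_, ?_⟩, ?_⟩
  · simp [SimpleGraph.Walk.isPath_def, h1.ne, h2.ne, hac]
  · simp only [SimpleGraph.Walk.darts_cons, SimpleGraph.Walk.darts_nil]
    exact List.Forall₂.cons ⟨ht1, e1⟩ (List.Forall₂.cons ⟨ht2, e2⟩ List.Forall₂.nil)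
  · show List.IsChain _ _; simp [hlt]
  · simp [List.getLast!_cons_eq_getLastD, List.getLastD]
end extraction

section lbs
variable {V : Type*} {G : SimpleGraph V} {Δ : ℕ} {lab : V → V → ℤ}

lemma lb_two {u v : V} (hadj : ¬ G.Adj u v) :
    ∀ d', HasDurD G Δ lab u v d' → 2 ≤ d' := by
  rintro d' ⟨W, times, hp, hne, ht, hdur⟩
  obtain ⟨hlen, -, -⟩ := temporal_facts ht hne
  have h2 : 2 ≤ times.length := by
    rw [hlen]
    exact walk_two_le_length hadj (by have := List.length_pos_iff.mpr hne; omega)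
  have hlt := my_head_lt_getLast ht.2 h2
  omega

lemma lb_mod {u v : V} (hadj : ¬ G.Adj u v) (e2 : ℤ)
    (hfirst : ∀ w, G.Adj u w → lab u w = 2 ∨ lab u w = 3)
    (hlast : ∀ w, G.Adj w v → lab w v = e2)
    (r3 r2 : ℤ) (h3 : r3 ≡ e2 - 3 [ZMOD (Δ:ℤ)]) (h2' : r2 ≡ e2 - 2 [ZMOD (Δ:ℤ)])
    (hr3 : 0 < r3) (hr3D : r3 ≤ Δ) (hr2 : 0 < r2) (hr2D : r2 ≤ Δ) (target : ℤ)
    (ht3 : target ≤ r3 + 1) (ht2 : target ≤ r2 + 1) :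
    ∀ d', HasDurD G Δ lab u v d' → target ≤ d' := by
  rintro d' ⟨W, times, hp, hne, ht, hdur⟩
  obtain ⟨hlen, ⟨w1, ha1, hm1⟩, ⟨w2, ha2, hm2⟩⟩ := temporal_facts ht hne
  have h2 : 2 ≤ times.length := by
    rw [hlen]
    exact walk_two_le_length hadj (by have := List.length_pos_iff.mpr hne; omega)
  have hlt := my_head_lt_getLast ht.2 h2
  rw [hlast w2 ha2] at hm2
  rcases hfirst w1 ha1 with hl | hl
  · rw [hl] at hm1
    have := my_diff_lb hm1 hm2 hlt h2' hr2 hr2D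
    omega
  · rw [hl] at hm1
    have := my_diff_lb hm1 hm2 hlt h3 hr3 hr3D
    omega
end lbs

/-- For a NAE-3-SAT formula `φ` (on variables `0, …, n−1`, each clause having three
distinct variables) satisfied in the NAE sense by `σ`, the constructed Δ-periodic temporal
graph (for any `Δ ≥ 3`) satisfies: for every variable `x_i`, the fastest temporal path from
`x_i` to the super vertex `v` has duration `2` and from `v` to `x_i` duration `Δ`; and for
every clause `c`, the fastest temporal path from `c` to `v` has duration `2` and from `v`
to `c` duration `Δ − 1`. -/
theorem stmt16 (n : ℕ) (φ : List Clause)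
    (hwf : ∀ C ∈ φ, C.1.1 < n ∧ C.2.1.1 < n ∧ C.2.2.1 < n ∧
      C.1.1 ≠ C.2.1.1 ∧ C.1.1 ≠ C.2.2.1 ∧ C.2.1.1 ≠ C.2.2.1)
    (σ : ℕ → Bool)
    (hsat : ∀ C ∈ φ, (evalLit σ C.1 ∨ evalLit σ C.2.1 ∨ evalLit σ C.2.2) ∧
      (¬ evalLit σ C.1 ∨ ¬ evalLit σ C.2.1 ∨ ¬ evalLit σ C.2.2))
    (Δ : ℕ) (hΔ : 3 ≤ Δ) :
    (∀ i < n,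
      IsFastestD (SimpleGraph.fromRel (NAERel n φ)) Δ (redLab σ) (Vtx.x i) Vtx.sup 2 ∧
      IsFastestD (SimpleGraph.fromRel (NAERel n φ)) Δ (redLab σ) Vtx.sup (Vtx.x i) (Δ : ℤ)) ∧
    (∀ j < φ.length,
      IsFastestD (SimpleGraph.fromRel (NAERel n φ)) Δ (redLab σ) (Vtx.cl j) Vtx.sup 2 ∧
      IsFastestD (SimpleGraph.fromRel (NAERel n φ)) Δ (redLab σ) Vtx.sup (Vtx.cl j)
        ((Δ : ℤ) - 1)) := by
  have hD : (3:ℤ) ≤ (Δ:ℤ) := by exact_mod_cast hΔ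
  have hper : ∀ c : ℤ, ((Δ:ℤ) + c) ≡ c [ZMOD (Δ:ℤ)] :=
    fun c => Int.modEq_iff_dvd.mpr ⟨-1, by ring⟩
  have hfirst : ∀ w, (SimpleGraph.fromRel (NAERel n φ)).Adj Vtx.sup w →
      redLab σ Vtx.sup w = 2 ∨ redLab σ Vtx.sup w = 3 := by
    intro w hw
    obtain ⟨k, -, hw'⟩ := adj_sup_to hw
    exact lab_sup_mem σ k w hw'
  constructor
  · intro i hi
    refine ⟨⟨?_, lb_two (not_adj_x_sup i)⟩, ⟨?_, ?_⟩⟩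
    · -- x i → sup has duration 2
      cases hσ : σ i
      · have h := hasDur_two (Δ := Δ) (lab := redLab σ) (adj_x_xT (φ := φ) hi) (adj_xT_sup hi) (by simp)
          (t1 := 2) (t2 := 3) (by norm_num) (by norm_num) (by norm_num)
          (by rw [lab_x_xT]) (by rw [lab_xT_sup, hσ]; exact Int.ModEq.refl 3)
        rwa [show (3:ℤ) - 2 + 1 = 2 by norm_num] at h
      · have h := hasDur_two (Δ := Δ) (lab := redLab σ) (adj_x_xF (φ := φ) hi) (adj_xF_sup hi) (by simp)
          (t1 := 2) (t2 := 3) (by norm_num) (by norm_num) (by norm_num)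
          (by rw [lab_x_xF]) (by rw [lab_xF_sup, hσ]; exact Int.ModEq.refl 3)
        rwa [show (3:ℤ) - 2 + 1 = 2 by norm_num] at h
    · -- sup → x i has duration Δ
      cases hσ : σ i
      · have h := hasDur_two (Δ := Δ) (lab := redLab σ) (adj_xT_sup (φ := φ) hi).symm (adj_x_xT hi).symm (by simp)
          (t1 := 3) (t2 := (Δ:ℤ) + 2) (by norm_num) (by omega) (by omega)
          (by rw [lab_sup_xT, hσ]; exact Int.ModEq.refl 3) (by rw [lab_xT_x]; exact Int.modEq_iff_dvd.mpr ⟨-1, by ring⟩)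
        rwa [show (Δ:ℤ) + 2 - 3 + 1 = (Δ:ℤ) by ring] at h
      · have h := hasDur_two (Δ := Δ) (lab := redLab σ) (adj_xF_sup (φ := φ) hi).symm (adj_x_xF hi).symm (by simp)
          (t1 := 3) (t2 := (Δ:ℤ) + 2) (by norm_num) (by omega) (by omega)
          (by rw [lab_sup_xF, hσ]; exact Int.ModEq.refl 3) (by rw [lab_xF_x]; exact Int.modEq_iff_dvd.mpr ⟨-1, by ring⟩)
        rwa [show (Δ:ℤ) + 2 - 3 + 1 = (Δ:ℤ) by ring] at h
    · -- lower bound Δ for sup → x i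
      refine lb_mod (fun h => not_adj_x_sup i h.symm) 2 hfirst ?_ ((Δ:ℤ) - 1) (Δ:ℤ)
        (Int.modEq_iff_dvd.mpr ⟨-1, by ring⟩) (Int.modEq_iff_dvd.mpr ⟨-1, by ring⟩)
        (by omega) (by omega) (by omega) (by omega) (Δ:ℤ) (by omega) (by omega)
      intro w hw
      rcases adj_to_x hw with rfl | rfl
      · exact lab_xT_x σ i i
      · exact lab_xF_x σ i i
  · intro j hj
    have hmem : φ.getD j default ∈ φ := by
      rw [List.getD_eq_getElem?_getD, List.getElem?_eq_getElem hj]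
      simpa using List.getElem_mem hj
    obtain ⟨h1n, h2n, h3n, -, -, -⟩ := hwf _ hmem
    obtain ⟨hT, hF⟩ := hsat _ hmem
    obtain ⟨l, hin, hev, hln⟩ : ∃ l : Lit, inClause l (φ.getD j default) ∧ evalLit σ l ∧ l.1 < n := by
      rcases hT with h | h | h
      · exact ⟨_, Or.inl rfl, h, h1n⟩
      · exact ⟨_, Or.inr (Or.inl rfl), h, h2n⟩
      · exact ⟨_, Or.inr (Or.inr rfl), h, h3n⟩
    obtain ⟨l', hin', hev', hln'⟩ :
        ∃ l : Lit, inClause l (φ.getD j default) ∧ ¬ evalLit σ l ∧ l.1 < n := by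
      rcases hF with h | h | h
      · exact ⟨_, Or.inl rfl, h, h1n⟩
      · exact ⟨_, Or.inr (Or.inl rfl), h, h2n⟩
      · exact ⟨_, Or.inr (Or.inr rfl), h, h3n⟩
    refine ⟨⟨?_, lb_two (not_adj_cl_sup j)⟩, ⟨?_, ?_⟩⟩
    · -- cl j → sup has duration 2
      have h := hasDur_two (Δ := Δ) (lab := redLab σ) (adj_cl_lit (n := n) hj hin) (adj_lit_sup hln) (by simp)
        (t1 := 1) (t2 := 2) (by norm_num) (by norm_num) (by norm_num)
        (by rw [lab_cl_left]) (by rw [lab_lit_sup_true σ hev])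
      rwa [show (2:ℤ) - 1 + 1 = 2 by norm_num] at h
    · -- sup → cl j has duration Δ - 1
      have h := hasDur_two (Δ := Δ) (lab := redLab σ) (adj_lit_sup (φ := φ) hln').symm (adj_cl_lit hj hin').symm
        (by simp)
        (t1 := 3) (t2 := (Δ:ℤ) + 1) (by norm_num) (by omega) (by omega)
        (by rw [lab_sup_lit_false σ hev']) (by rw [lab_cl_right]; exact Int.modEq_iff_dvd.mpr ⟨-1, by ring⟩)
      rwa [show (Δ:ℤ) + 1 - 3 + 1 = (Δ:ℤ) - 1 by ring] at h
    · -- lower bound Δ - 1 for sup → cl j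
      exact lb_mod (not_adj_sup_cl j) 1 hfirst (fun w _ => lab_cl_right σ w j)
        ((Δ:ℤ) - 2) ((Δ:ℤ) - 1)
        (Int.modEq_iff_dvd.mpr ⟨-1, by ring⟩) (Int.modEq_iff_dvd.mpr ⟨-1, by ring⟩)
        (by omega) (by omega) (by omega) (by omega) ((Δ:ℤ) - 1) (by omega) (by omega)
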